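/- Let κ be a cardinal and (C_β)_{β<κ} a family of uncountable subsets of ω₁ such that |C_β ∩ C_γ| ≤ ℵ₀ for all β < γ < κ. Let P be the set of pairs (D,f) where D is a finite subset of κ, f is a function with domain D, and f(δ) ∈ Fn(C_δ,2) for every δ ∈ D, ordered by: (D',f') ≤ (D,f) iff D ⊆ D', f(δ) ⊆ f'(δ) for all δ ∈ D, and the sets (f'(δ))^{-1}[{1}] \ (f(δ))^{-1}[{1}], for δ ∈ D, are pairwise disjoint. Then P has property K. -/

import Mathlib

open Cardinal Set

/-- `Fn A`: finite partial functions from `A` to `2` (represented as `Bool`). -/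
def Fn (A : Type*) : Type _ :=
  {p : A → Option Bool // {a | p a ≠ none}.Finite}

/-- `Fn A` ordered by reverse inclusion: `q ≤ p` iff `q` extends `p`. -/
instance Fn.instPartialOrder (A : Type*) : PartialOrder (Fn A) where
  le q p := ∀ a, p.1 a ≠ none → q.1 a = p.1 a
  le_refl p := fun _ _ => rfl
  le_trans r q p hrq hqp := fun a ha => by
    have h1 := hqp a ha
    have h2 := hrq a (h1 ▸ ha)
    rw [h2, h1]
  le_antisymm p q h h' := Subtype.ext <| funext fun a => by
    by_cases hq : q.1 a = none
    · by_cases hp : p.1 a = none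
      · rw [hp, hq]
      · exact (h' a hp).symm
    · exact h a hq

/-- The empty condition is the greatest element of `Fn A`. -/
instance Fn.instOrderTop (A : Type*) : OrderTop (Fn A) where
  top := ⟨fun _ => none, by simp⟩
  le_top p := fun a ha => absurd rfl ha

/-- The canonical type of cardinality `ℵ₁` (representing `ω₁`). -/
noncomputable abbrev Omega1Type : Type := (aleph 1).ord.ToType


/-- Pigeonhole: an uncountable set mapped into a set with countable image has an
uncountable fiber. -/
lemma uncountable_fiber {α β : Type*} {A : Set α} (hA : ¬A.Countable) (f : α → β)
    (hf : (f '' A).Countable) : ∃ b, ¬{p ∈ A | f p = b}.Countable := by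
  by_contra h
  push_neg at h
  apply hA
  have hsub : A ⊆ ⋃ b ∈ f '' A, {p ∈ A | f p = b} :=
    fun p hp => mem_biUnion (mem_image_of_mem f hp) ⟨hp, rfl⟩
  exact (hf.biUnion fun b _ => h b).mono hsub

/-- The collection of finsets contained in a countable set is countable. -/
lemma countable_finset_subset {β : Type*} {Z : Set β} (hZ : Z.Countable) :
    {s : Finset β | ↑s ⊆ Z}.Countable := by
  classical
  haveI := hZ.to_subtype
  apply Set.Countable.mono ?_ (Set.countable_range
    (fun s' : Finset Z => s'.map (Function.Embedding.subtype _)))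
  intro s hs
  exact ⟨s.subtype (· ∈ Z), Finset.subtype_map_of_mem hs⟩

/-- Δ-system lemma, fixed cardinality version. -/
lemma delta_system_of_card {α X : Type*} [DecidableEq X] : ∀ (n : ℕ) (A : Set α) (D : α → Finset X),
    ¬A.Countable → (∀ p ∈ A, (D p).card = n) →
    ∃ A' ⊆ A, ¬A'.Countable ∧ ∃ R, ∀ p ∈ A', ∀ q ∈ A', p ≠ q → D p ∩ D q = R := by
  classical
  intro n
  induction n with
  | zero =>
    intro A D hA hcard
    refine ⟨A, Subset.rfl, hA, ∅, fun p hp q hq _ => ?_⟩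
    rw [Finset.card_eq_zero.mp (hcard p hp), Finset.empty_inter]
  | succ n ih =>
    intro A D hA hcard
    by_cases h : ∃ a, ¬{p ∈ A | a ∈ D p}.Countable
    · obtain ⟨a, ha⟩ := h
      obtain ⟨A', hA'sub, hA'unc, R, hR⟩ := ih {p ∈ A | a ∈ D p} (fun p => (D p).erase a) ha
        (fun p hp => by rw [Finset.card_erase_of_mem hp.2, hcard p hp.1]; omega)
      refine ⟨A', fun p hp => (hA'sub hp).1, hA'unc, insert a R, fun p hp q hq hpq => ?_⟩
      have hap : a ∈ D p := (hA'sub hp).2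
      have haq : a ∈ D q := (hA'sub hq).2
      have := hR p hp q hq hpq
      ext x
      simp only [Finset.mem_inter, Finset.mem_insert]
      constructor
      · rintro ⟨hxp, hxq⟩
        by_cases hxa : x = a
        · exact Or.inl hxa
        · refine Or.inr ?_
          rw [← this]
          simp [Finset.mem_erase, hxa, hxp, hxq]
      · rintro (rfl | hx)
        · exact ⟨hap, haq⟩
        · rw [← this] at hx
          simp only [Finset.mem_inter, Finset.mem_erase] at hx
          exact ⟨hx.1.2, hx.2.2⟩
    · push_neg at h
      have hzorn : ∀ c ⊆ {T : Set α | T ⊆ A ∧ ∀ p ∈ T, ∀ q ∈ T, p ≠ q → Disjoint (D p) (D q)},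
          IsChain (· ⊆ ·) c → ∃ ub ∈ {T : Set α | T ⊆ A ∧ ∀ p ∈ T, ∀ q ∈ T, p ≠ q → Disjoint (D p) (D q)},
          ∀ s ∈ c, s ⊆ ub := by
        intro c hc hchain
        refine ⟨⋃₀ c, ⟨?_, ?_⟩, fun s hs => subset_sUnion_of_mem hs⟩
        · exact sUnion_subset fun s hs => (hc hs).1
        · rintro p ⟨s, hs, hps⟩ q ⟨t, ht, hqt⟩ hpq
          rcases hchain.total hs ht with hst | hts
          · exact (hc ht).2 p (hst hps) q hqt hpq
          · exact (hc hs).2 p hps q (hts hqt) hpq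
      obtain ⟨T, hT⟩ := zorn_subset
        {T : Set α | T ⊆ A ∧ ∀ p ∈ T, ∀ q ∈ T, p ≠ q → Disjoint (D p) (D q)} hzorn
      obtain ⟨⟨hTA, hTdisj⟩, hTmax⟩ := hT
      have hTunc : ¬T.Countable := by
        intro hTc
        have hU : (⋃ p ∈ T, (↑(D p) : Set X)).Countable :=
          hTc.biUnion fun p _ => (D p).countable_toSet
        apply hA
        have : A ⊆ T ∪ ⋃ a ∈ ⋃ p ∈ T, (↑(D p) : Set X), {p ∈ A | a ∈ D p} := by
          intro q hq
          by_cases hqT : q ∈ T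
          · exact Or.inl hqT
          right
          by_contra hq2
          have : insert q T ∈ {T : Set α | T ⊆ A ∧ ∀ p ∈ T, ∀ q ∈ T, p ≠ q → Disjoint (D p) (D q)} := by
            refine ⟨insert_subset hq hTA, ?_⟩
            rintro p (rfl | hp) p' (rfl | hp') hne
            · exact absurd rfl hne
            · refine Finset.disjoint_left.mpr fun x hx hx' => ?_
              exact hq2 (mem_biUnion (mem_biUnion hp' (Finset.mem_coe.mpr hx')) ⟨hq, hx⟩)
            · refine Finset.disjoint_left.mpr fun x hx hx' => ?_
              exact hq2 (mem_biUnion (mem_biUnion hp (Finset.mem_coe.mpr hx)) ⟨hq, hx'⟩)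
            · exact hTdisj p hp p' hp' hne
          exact hqT (hTmax this (subset_insert q T) (mem_insert q T))
        exact ((hTc.union (hU.biUnion fun a _ => h a)).mono this)
      refine ⟨T, hTA, hTunc, ∅, fun p hp q hq hpq => ?_⟩
      exact Finset.disjoint_iff_inter_eq_empty.mp (hTdisj p hp q hq hpq)

/-- Δ-system lemma. -/
lemma delta_system {α X : Type*} [DecidableEq X] (A : Set α) (D : α → Finset X) (hA : ¬A.Countable) :
    ∃ A' ⊆ A, ¬A'.Countable ∧ ∃ R, ∀ p ∈ A', ∀ q ∈ A', p ≠ q → D p ∩ D q = R := by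
  obtain ⟨n, hn⟩ := uncountable_fiber hA (fun p => (D p).card) (Set.to_countable _)
  obtain ⟨A', h1, h2, R, hR⟩ := delta_system_of_card n {p ∈ A | (D p).card = n} D hn
    (fun p hp => hp.2)
  exact ⟨A', fun p hp => (h1 hp).1, h2, R, hR⟩


/-- Union of two finite partial functions, preferring the first. -/
def Fn.union {A : Type*} (x y : Fn A) : Fn A :=
  ⟨fun a => if x.1 a = none then y.1 a else x.1 a, by
    apply Set.Finite.subset (x.2.union y.2)
    intro a ha
    simp only [Set.mem_setOf_eq, Set.mem_union] at *
    by_cases h : x.1 a = none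
    · right; rwa [if_pos h] at ha
    · left; exact h⟩

lemma Fn.union_le_left {A : Type*} (x y : Fn A) : x.union y ≤ x :=
  fun a ha => if_neg ha

lemma Fn.top_apply {A : Type*} (a : A) : (⊤ : Fn A).1 a = none := rfl

lemma Fn.union_apply {A : Type*} (x y : Fn A) (a : A) :
    (x.union y).1 a = if x.1 a = none then y.1 a else x.1 a := rfl

lemma Fn.top_union {A : Type*} (y : Fn A) : (⊤ : Fn A).union y = y := by
  apply Subtype.ext
  funext a
  rw [Fn.union_apply, if_pos (Fn.top_apply a)]

variable {I : Type} (C : I → Set Omega1Type)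

/-- Conditions: pairs `(D, f)` with `D` a finite subset of the index set and
`f(δ) ∈ Fn(C δ, 2)` for `δ ∈ D` (and `f` trivial outside `D`). -/
def PCond : Type :=
  {p : Finset I × ((δ : I) → Fn (C δ)) // ∀ δ, δ ∉ p.1 → p.2 δ = ⊤}

/-- The ordering on `PCond`: `(D', f') ≤ (D, f)` iff `D ⊆ D'`, `f(δ) ⊆ f'(δ)` for all
`δ ∈ D`, and the sets `f'(δ)⁻¹[{1}] \ f(δ)⁻¹[{1}]`, for `δ ∈ D`, are pairwise disjoint. -/
def PCond.le (p' p : PCond C) : Prop :=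
  p.1.1 ⊆ p'.1.1 ∧ (∀ δ ∈ p.1.1, p'.1.2 δ ≤ p.1.2 δ) ∧
    ∀ δ ∈ p.1.1, ∀ γ ∈ p.1.1, δ ≠ γ →
      Disjoint
        (Subtype.val '' {a | (p'.1.2 δ).1 a = some true ∧ ¬(p.1.2 δ).1 a = some true})
        (Subtype.val '' {a | (p'.1.2 γ).1 a = some true ∧ ¬(p.1.2 γ).1 a = some true})

theorem pcond_property_K (κ : Cardinal) (I : Type) (hI : #I = κ)
    (C : I → Set Omega1Type)
    (hC : ∀ β, ¬(C β).Countable)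
    (hCC : ∀ β γ, β ≠ γ → (C β ∩ C γ).Countable) :
    ∀ S : Set (PCond C), ¬S.Countable →
      ∃ T ⊆ S, ¬T.Countable ∧
        ∀ p ∈ T, ∀ q ∈ T, ∃ r : PCond C, r.le C p ∧ r.le C q := by
  classical
  intro S hS
  obtain ⟨S₁, hS₁S, hS₁, R, hR⟩ := delta_system S (fun p => p.1.1) hS
  set u : PCond C → Finset Omega1Type :=
    fun p => R.biUnion (fun δ => ((p.1.2 δ).2.toFinset.image Subtype.val)) with hu
  obtain ⟨S₂, hS₂S, hS₂, U, hUroot⟩ := delta_system S₁ u hS₁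
  set B : Set Omega1Type := ⋃ δ ∈ (↑R : Set I), ⋃ γ ∈ (↑R : Set I),
    {x | δ ≠ γ ∧ x ∈ C δ ∧ x ∈ C γ} with hB
  have hBc : B.Countable := by
    refine Set.Countable.biUnion R.countable_toSet fun δ _ =>
      Set.Countable.biUnion R.countable_toSet fun γ _ => ?_
    by_cases h : δ = γ
    · convert Set.countable_empty
      ext x; simp [h]
    · exact (hCC δ γ h).mono fun x hx => Set.mem_inter hx.2.1 hx.2.2
  set W : Set Omega1Type := ↑U ∪ B with hW
  have hWc : W.Countable := U.countable_toSet.union hBc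
  set φ : PCond C → Finset (I × Omega1Type × Bool) := fun p =>
    R.biUnion (fun δ => Finset.image
      (fun a : ↥(C δ) => (δ, Subtype.val a, ((p.1.2 δ).1 a).getD false))
      ((p.1.2 δ).2.toFinset.filter (fun a : ↥(C δ) => Subtype.val a ∈ W))) with hφdef
  have hφc : (φ '' S₂).Countable := by
    refine (countable_finset_subset
      ((R.countable_toSet.prod (hWc.prod (Set.countable_univ (α := Bool)))))).mono ?_
    rintro _ ⟨p, _, rfl⟩
    simp only [Set.mem_setOf_eq]
    intro x hx
    rw [Finset.mem_coe] at hx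
    simp only [hφdef, Finset.mem_biUnion, Finset.mem_image, Finset.mem_filter] at hx
    obtain ⟨δ, hδ, a, ⟨_, haW⟩, rfl⟩ := hx
    exact Set.mem_prod.mpr ⟨hδ, Set.mem_prod.mpr ⟨haW, trivial⟩⟩
  obtain ⟨s₀, hs₀⟩ := uncountable_fiber hS₂ φ hφc
  set T := {p ∈ S₂ | φ p = s₀} with hT
  have hTS₂ : T ⊆ S₂ := fun p hp => hp.1
  -- key agreement lemma
  have hag1 : ∀ p ∈ T, ∀ q ∈ T, ∀ δ ∈ R, ∀ a : ↥(C δ), (↑a : Omega1Type) ∈ W →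
      ∀ b, (p.1.2 δ).1 a = some b → (q.1.2 δ).1 a = some b := by
    intro p hp q hq δ hδ a haW b hab
    have hφpq : φ p = φ q := hp.2.trans hq.2.symm
    have hmem : (δ, (↑a : Omega1Type), b) ∈ φ p := by
      simp only [hφdef, Finset.mem_biUnion, Finset.mem_image, Finset.mem_filter]
      refine ⟨δ, hδ, a, ⟨?_, haW⟩, ?_⟩
      · rw [Set.Finite.mem_toFinset]; simp [hab]
      · rw [hab]; rfl
    rw [hφpq] at hmem
    simp only [hφdef, Finset.mem_biUnion, Finset.mem_image, Finset.mem_filter] at hmem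
    obtain ⟨δ', hδ', a', ⟨ha'supp, _⟩, heq⟩ := hmem
    injection heq with h1 heq2
    subst h1
    injection heq2 with hval hb
    have haa : a' = a := Subtype.coe_injective hval
    subst haa
    rw [Set.Finite.mem_toFinset] at ha'supp
    simp only [Set.mem_setOf_eq] at ha'supp
    obtain ⟨c, hc⟩ := Option.ne_none_iff_exists'.mp ha'supp
    rw [hc]
    rw [hc] at hb
    simpa using hb
  have hag : ∀ p ∈ T, ∀ q ∈ T, ∀ δ ∈ R, ∀ a : ↥(C δ), (↑a : Omega1Type) ∈ W →
      (p.1.2 δ).1 a = (q.1.2 δ).1 a := by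
    intro p hp q hq δ hδ a haW
    cases h1 : (p.1.2 δ).1 a with
    | none =>
      cases h2 : (q.1.2 δ).1 a with
      | none => rfl
      | some c =>
        rw [hag1 q hq p hp δ hδ a haW c h2] at h1
        exact nomatch h1
    | some b => exact (hag1 p hp q hq δ hδ a haW b h1).symm
  refine ⟨T, fun p hp => hS₁S (hS₂S (hTS₂ hp)), hs₀, ?_⟩
  intro p hp q hq
  by_cases hpq : p = q
  · subst hpq
    refine ⟨p, ⟨subset_rfl, fun δ _ => le_refl _, fun δ _ γ _ _ => ?_⟩,
      ⟨subset_rfl, fun δ _ => le_refl _, fun δ _ γ _ _ => ?_⟩⟩ <;>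
    · refine Set.disjoint_left.mpr ?_
      rintro x ⟨a, ⟨h1, h2⟩, rfl⟩
      exact absurd h1 h2
  -- roots
  have hRpq : p.1.1 ∩ q.1.1 = R := hR p (hS₂S (hTS₂ hp)) q (hS₂S (hTS₂ hq)) hpq
  have hUpq : u p ∩ u q = U := hUroot p (hTS₂ hp) q (hTS₂ hq) hpq
  -- agreement on W for δ in R
  have hagpq : ∀ δ ∈ R, ∀ a : ↥(C δ), (↑a : Omega1Type) ∈ W →
      (p.1.2 δ).1 a = (q.1.2 δ).1 a := fun δ hδ a haW => hag p hp q hq δ hδ a haW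
  -- compatibility
  have hcomp : ∀ δ ∈ R, ∀ a : ↥(C δ), (p.1.2 δ).1 a ≠ none → (q.1.2 δ).1 a ≠ none →
      (p.1.2 δ).1 a = (q.1.2 δ).1 a := by
    intro δ hδ a hpa hqa
    apply hagpq δ hδ
    have h1 : (↑a : Omega1Type) ∈ u p := by
      simp only [hu, Finset.mem_biUnion, Finset.mem_image]
      exact ⟨δ, hδ, a, by rw [Set.Finite.mem_toFinset]; exact hpa, rfl⟩
    have h2 : (↑a : Omega1Type) ∈ u q := by
      simp only [hu, Finset.mem_biUnion, Finset.mem_image]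
      exact ⟨δ, hδ, a, by rw [Set.Finite.mem_toFinset]; exact hqa, rfl⟩
    have : (↑a : Omega1Type) ∈ u p ∩ u q := Finset.mem_inter.mpr ⟨h1, h2⟩
    rw [hUpq] at this
    exact Or.inl this
  -- the common extension
  refine ⟨⟨(p.1.1 ∪ q.1.1, fun δ => (p.1.2 δ).union (q.1.2 δ)), ?_⟩, ?_, ?_⟩
  · intro δ hδ
    simp only [Finset.mem_union, not_or] at hδ
    show (p.1.2 δ).union (q.1.2 δ) = ⊤
    rw [p.2 δ hδ.1, q.2 δ hδ.2, Fn.top_union]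
  · -- r ≤ p
    refine ⟨Finset.subset_union_left, fun δ _ => Fn.union_le_left _ _, ?_⟩
    intro δ hδ γ hγ hδγ
    refine Set.disjoint_left.mpr ?_
    rintro x ⟨a, ⟨ha1, ha2⟩, rfl⟩ ⟨a', ⟨ha'1, ha'2⟩, hval⟩
    -- analyze new-true points for δ
    have hnew : ∀ ε (hε : ε ∈ p.1.1) (b : ↥(C ε)),
        ((p.1.2 ε).union (q.1.2 ε)).1 b = some true → ¬(p.1.2 ε).1 b = some true →
        ε ∈ R ∧ (↑b : Omega1Type) ∉ W := by
      intro ε hε b hb1 hb2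
      rw [Fn.union_apply] at hb1
      by_cases hpb : (p.1.2 ε).1 b = none
      · rw [if_pos hpb] at hb1
        have hεq : ε ∈ q.1.1 := by
          by_contra hεq
          rw [q.2 ε hεq] at hb1
          exact absurd hb1 (by simp [Fn.top_apply])
        have hεR : ε ∈ R := hRpq ▸ Finset.mem_inter.mpr ⟨hε, hεq⟩
        refine ⟨hεR, fun hbW => ?_⟩
        rw [hagpq ε hεR b hbW, hb1] at hpb
        exact nomatch hpb
      · rw [if_neg hpb] at hb1
        exact absurd hb1 hb2
    obtain ⟨hδR, haW⟩ := hnew δ hδ a ha1 ha2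
    obtain ⟨hγR, ha'W⟩ := hnew γ hγ a' ha'1 ha'2
    apply haW
    refine Or.inr ?_
    rw [hB]
    refine Set.mem_biUnion hδR (Set.mem_biUnion hγR ?_)
    exact ⟨hδγ, a.2, hval ▸ a'.2⟩
  · -- r ≤ q
    refine ⟨Finset.subset_union_right, ?_, ?_⟩
    · intro δ hδq a haq
      rw [Fn.union_apply]
      by_cases hpa : (p.1.2 δ).1 a = none
      · rw [if_pos hpa]
      · rw [if_neg hpa]
        have hδp : δ ∈ p.1.1 := by
          by_contra hδp
          rw [p.2 δ hδp] at hpa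
          exact hpa rfl
        exact hcomp δ (hRpq ▸ Finset.mem_inter.mpr ⟨hδp, hδq⟩) a hpa haq
    · intro δ hδ γ hγ hδγ
      refine Set.disjoint_left.mpr ?_
      rintro x ⟨a, ⟨ha1, ha2⟩, rfl⟩ ⟨a', ⟨ha'1, ha'2⟩, hval⟩
      have hnew : ∀ ε (hε : ε ∈ q.1.1) (b : ↥(C ε)),
          ((p.1.2 ε).union (q.1.2 ε)).1 b = some true → ¬(q.1.2 ε).1 b = some true →
          ε ∈ R ∧ (↑b : Omega1Type) ∉ W := by
        intro ε hε b hb1 hb2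
        rw [Fn.union_apply] at hb1
        by_cases hpb : (p.1.2 ε).1 b = none
        · rw [if_pos hpb] at hb1
          exact absurd hb1 hb2
        · rw [if_neg hpb] at hb1
          have hεp : ε ∈ p.1.1 := by
            by_contra hεp
            rw [p.2 ε hεp] at hpb
            exact hpb rfl
          have hεR : ε ∈ R := hRpq ▸ Finset.mem_inter.mpr ⟨hεp, hε⟩
          refine ⟨hεR, fun hbW => ?_⟩
          rw [← hagpq ε hεR b hbW, hb1] at hb2
          exact hb2 rfl
      obtain ⟨hδR, haW⟩ := hnew δ hδ a ha1 ha2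
      obtain ⟨hγR, ha'W⟩ := hnew γ hγ a' ha'1 ha'2
      apply haW
      refine Or.inr ?_
      rw [hB]
      refine Set.mem_biUnion hδR (Set.mem_biUnion hγR ?_)
      exact ⟨hδγ, a.2, hval ▸ a'.2⟩
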